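/- Let R be an associative ring and a_1,…,a_n ∈ R (n ≥ 1). Then the left-normed commutator bracket satisfies [a_1,…,a_n] = ∑_{i=0}^{n-1} ∑_{(α,β)∈Sh¹(n−i,i)} (−1)^i · a_{β(i)}⋯a_{β(1)} a_{α(1)}⋯a_{α(n−i)}. -/

import Mathlib

/-- The left-normed Lie bracket `[a₁,…,aₘ]` of a list of elements of a Lie ring,
defined by `[a₁] = a₁` and `[a₁,…,aₘ] = [[a₁,…,a_{m-1}], aₘ]` (and `0` for the empty list). -/
def lieWord {L : Type*} [LieRing L] : List L → L
  | [] => 0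
  | x :: xs => xs.foldl (fun a b => ⁅a, b⁆) x

/-- An `(s,t)`-shuffle `(α,β)` with `α(1) = 1`: a pair of strictly increasing maps
`α : {1,…,s} → {1,…,s+t}`, `β : {1,…,t} → {1,…,s+t}` with disjoint images and `α(1) = 1`
(everything 0-indexed, so the last condition reads `α 0 = 0`).  This is the set `Sh¹(s,t)`. -/
structure Shuffle1 (s t : ℕ) where
  α : Fin s → Fin (s + t)
  β : Fin t → Fin (s + t)
  mono_alpha : StrictMono α
  mono_beta : StrictMono β
  disj : ∀ i j, α i ≠ β j
  first : ∀ hs : 0 < s, α ⟨0, hs⟩ = ⟨0, Nat.lt_of_lt_of_le hs (Nat.le_add_right s t)⟩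

attribute [local instance 100] LieRing.ofAssociativeRing

section pieces

variable {R : Type*} [Ring R]

lemma stageA (n : ℕ) (b : Fin n → R) (x : R) :
    (List.ofFn b).foldl (fun p q => ⁅p, q⁆) x
      = ∑ c : Fin n → Bool,
          (List.ofFn fun i => if c i then -(b i) else 1).reverse.prod * x *
          (List.ofFn fun i => if c i then 1 else b i).prod := by
  induction n with
  | zero => simp
  | succ m ih =>
    rw [← Fin.snoc_init_self b]
    set y := b (Fin.last m) with hy
    set g := Fin.init b with hg
    rw [List.ofFn_succ', List.concat_eq_append]
    simp only [Fin.snoc_castSucc]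
    rw [List.foldl_append]
    simp only [List.foldl_cons, List.foldl_nil, Fin.snoc_last]
    rw [ih]
    rw [← Equiv.sum_comp (Fin.snocEquiv (fun _ => Bool)) _]
    rw [Fintype.sum_prod_type]
    rw [Fintype.sum_bool]
    have key : ∀ (v : Bool) (c : Fin m → Bool),
        (List.ofFn fun i : Fin (m+1) =>
            if (Fin.snocEquiv (fun _ => Bool) (v, c)) i then -(Fin.snoc g y i) else 1)
          = (List.ofFn fun i : Fin m => if c i then -(g i) else 1) ++ [if v then -y else 1] := by
      intro v c
      rw [List.ofFn_succ', List.concat_eq_append]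
      congr 1
      · congr 1; funext i; simp [Fin.snocEquiv, Fin.snoc_castSucc]
      · simp [Fin.snocEquiv, Fin.snoc_last]
    have key2 : ∀ (v : Bool) (c : Fin m → Bool),
        (List.ofFn fun i : Fin (m+1) =>
            if (Fin.snocEquiv (fun _ => Bool) (v, c)) i then 1 else Fin.snoc g y i)
          = (List.ofFn fun i : Fin m => if c i then 1 else g i) ++ [if v then 1 else y] := by
      intro v c
      rw [List.ofFn_succ', List.concat_eq_append]
      congr 1
      · congr 1; funext i; simp [Fin.snocEquiv, Fin.snoc_castSucc]
      · simp [Fin.snocEquiv, Fin.snoc_last]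
    simp only [key, key2]
    simp only [List.reverse_append, List.prod_append, List.reverse_singleton,
      List.prod_cons, List.prod_nil, List.reverse_cons]
    simp only [if_true, if_false, Bool.cond_true]
    rw [Ring.lie_def]
    rw [Finset.mul_sum, Finset.sum_mul, ← Finset.sum_sub_distrib, ← Finset.sum_add_distrib]
    apply Finset.sum_congr rfl
    intro c _
    simp only [Bool.false_eq_true, if_false, List.reverse_nil, List.prod_nil, one_mul, mul_one]
    noncomm_ring


lemma sortMap {α β : Type*} [LinearOrder α] [LinearOrder β] (e : α ↪o β) (s : Finset α) :
    (s.map ⟨e, e.injective⟩).sort (· ≤ ·) = (s.sort (· ≤ ·)).map e := by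
  refine (fun hp h1 h2 => List.Perm.eq_of_pairwise' (r := (· ≤ ·)) h1 h2 hp) ?_ ?_ ?_
  · apply Multiset.coe_eq_coe.mp
    rw [Finset.sort_eq, Finset.map_val, ← Finset.sort_eq s (· ≤ ·)]
    rfl
  · exact Finset.pairwise_sort _ _
  · exact List.Pairwise.map e (fun a b h => e.monotone h) (Finset.pairwise_sort s _)

lemma maskProd {M : Type*} [Monoid M] :
    ∀ (N : ℕ) (T : Finset (Fin N)) (f : Fin N → M),
    ((T.sort (· ≤ ·)).map f).prod = (List.ofFn fun j => if j ∈ T then f j else 1).prod := by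
  intro N
  induction N with
  | zero => intro T f; simp [Finset.eq_empty_of_isEmpty T]
  | succ m ih =>
    intro T f
    set S : Finset (Fin m) := Finset.univ.filter (fun j => j.succ ∈ T) with hS
    have hmem : ∀ i : Fin m, i.succ ∈ T ↔ i ∈ S := by simp [hS]
    have herase : T.erase 0 = S.map ⟨Fin.succ, Fin.succ_injective m⟩ := by
      ext x
      simp only [Finset.mem_erase, Finset.mem_map, Function.Embedding.coeFn_mk]
      constructor
      · rintro ⟨hx0, hxT⟩
        obtain ⟨y, rfl⟩ := Fin.eq_succ_of_ne_zero hx0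
        exact ⟨y, (hmem y).mp hxT, rfl⟩
      · rintro ⟨y, hy, rfl⟩
        exact ⟨Fin.succ_ne_zero y, (hmem y).mpr hy⟩
    have hsortS : ((S.map ⟨Fin.succ, Fin.succ_injective m⟩).sort (· ≤ ·))
        = (S.sort (· ≤ ·)).map Fin.succ :=
      sortMap ⟨⟨Fin.succ, Fin.succ_injective m⟩, by simp [Fin.succ_le_succ_iff]⟩ S
    rw [List.ofFn_succ]
    simp only [hmem]
    rw [List.prod_cons, ← ih S (fun i => f i.succ)]
    by_cases h0 : (0 : Fin (m+1)) ∈ T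
    · rw [if_pos h0]
      conv_lhs => rw [show T = insert 0 (T.erase 0) from (Finset.insert_erase h0).symm]
      rw [Finset.sort_insert (· ≤ ·) (fun b _ => Fin.zero_le b) (Finset.notMem_erase 0 T),
        herase, hsortS]
      simp [List.map_map, Function.comp_def]
    · rw [if_neg h0, one_mul]
      have : T = S.map ⟨Fin.succ, Fin.succ_injective m⟩ := by
        rw [← herase, Finset.erase_eq_of_notMem h0]
      rw [this, hsortS]
      simp [List.map_map, Function.comp_def]

lemma maskProdRev {M : Type*} [Monoid M] (N : ℕ) (T : Finset (Fin N)) (f : Fin N → M) :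
    ((T.sort (· ≤ ·)).map f).reverse.prod
      = (List.ofFn fun j => if j ∈ T then f j else 1).reverse.prod := by
  have key : ∀ l : List M, l.reverse.prod = ((l.map MulOpposite.op).prod).unop := by
    intro l
    rw [MulOpposite.unop_list_prod, List.map_map]
    simp [Function.comp_def]
  rw [key, key]
  congr 1
  rw [List.map_map, List.map_ofFn]
  rw [show (MulOpposite.op ∘ fun j : Fin N => if j ∈ T then f j else 1)
      = fun j : Fin N => if j ∈ T then (MulOpposite.op ∘ f) j else 1 by
    funext j; by_cases h : j ∈ T <;> simp [h]]
  exact maskProd N T (MulOpposite.op ∘ f)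


variable {R : Type*} [Ring R]

lemma listSign : ∀ l : List (Bool × R),
    (l.map fun p => if p.1 then -p.2 else p.2).prod
      = (-1 : R) ^ ((l.map fun p => if p.1 then 1 else 0).sum) * (l.map Prod.snd).prod := by
  intro l
  induction l with
  | nil => simp
  | cons p l ih =>
    simp only [List.map_cons, List.prod_cons, List.sum_cons, ih]
    have hc : Commute ((-1 : R) ^ ((l.map fun p => if p.1 then (1:ℕ) else 0).sum)) p.2 :=
      (Commute.neg_one_left p.2).pow_left _
    by_cases h : p.1
    · simp only [if_pos h, pow_add, pow_one]
      rw [neg_one_mul, neg_mul, neg_mul, neg_inj, ← mul_assoc, ← hc.eq, mul_assoc]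
    · simp only [if_neg h, zero_add]
      rw [← mul_assoc, ← hc.eq, mul_assoc]

lemma signOfFnAux (n : ℕ) (c : Fin n → Bool) (b : Fin n → R) :
    ((List.ofFn fun i => (c i, if c i then b i else 1)).map fun p => if p.1 then -p.2 else p.2)
        = (List.ofFn fun i => if c i then -(b i) else 1)
      ∧ ((List.ofFn fun i => (c i, if c i then b i else 1)).map Prod.snd)
        = (List.ofFn fun i => if c i then b i else 1)
      ∧ ((List.ofFn fun i => (c i, if c i then b i else 1)).map fun p => if p.1 then 1 else 0).sum
        = ((Finset.univ.filter fun i => c i).card : ℕ) := by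
  refine ⟨?_, ?_, ?_⟩
  · rw [List.map_ofFn]; congr 1; funext i; by_cases h : c i <;> simp [h]
  · rw [List.map_ofFn]; rfl
  · rw [List.map_ofFn, List.sum_ofFn, Finset.card_filter]
    simp [Function.comp_def]

lemma signOfFn (n : ℕ) (c : Fin n → Bool) (b : Fin n → R) :
    (List.ofFn fun i => if c i then -(b i) else 1).prod
      = (-1 : R) ^ ((Finset.univ.filter fun i => c i).card)
        * (List.ofFn fun i => if c i then b i else 1).prod := by
  obtain ⟨h1, h2, h3⟩ := signOfFnAux n c b
  rw [← h1, ← h2, listSign, h3]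

lemma signOfFnRev (n : ℕ) (c : Fin n → Bool) (b : Fin n → R) :
    (List.ofFn fun i => if c i then -(b i) else 1).reverse.prod
      = (-1 : R) ^ ((Finset.univ.filter fun i => c i).card)
        * (List.ofFn fun i => if c i then b i else 1).reverse.prod := by
  obtain ⟨h1, h2, h3⟩ := signOfFnAux n c b
  rw [← h1, ← h2, ← List.map_reverse, ← List.map_reverse, listSign]
  congr 2
  rw [List.map_reverse, List.sum_reverse, h3]



namespace Shuffle1

lemma ext'' {s t : ℕ} {x y : Shuffle1 s t} (h1 : x.α = y.α) (h2 : x.β = y.β) : x = y := by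
  cases x; cases y
  cases h1; cases h2
  rfl

noncomputable instance (s t : ℕ) : Fintype (Shuffle1 s t) :=
  Fintype.ofInjective (fun sh => (sh.α, sh.β))
    (fun x y h => ext'' (congrArg Prod.fst h) (congrArg Prod.snd h))

end Shuffle1

lemma ofFn_orderEmbOfFin {γ : Type*} {α : Type*} [LinearOrder α] (T : Finset α) {k : ℕ}
    (hk : T.card = k) (f : α → γ) :
    List.ofFn (fun i => f (T.orderEmbOfFin hk i)) = (T.sort (· ≤ ·)).map f := by
  apply List.ext_getElem
  · simp [Finset.length_sort, hk]
  · intro i h1 h2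
    simp [List.getElem_ofFn, List.getElem_map, Finset.orderEmbOfFin_apply]

variable {R : Type*} [Ring R]

lemma stageB (s t N : ℕ) (h : s + t = N) (hs : 0 < s) (f : Fin N → R) (C : R) :
    (∑ᶠ sh : Shuffle1 s t,
      C * ((List.ofFn fun j => f (Fin.cast h (sh.β j))).reverse
            ++ List.ofFn fun j => f (Fin.cast h (sh.α j))).prod)
      = ∑ T ∈ Finset.univ.filter
            (fun T : Finset (Fin N) => T.card = t ∧
              (⟨0, h ▸ Nat.lt_of_lt_of_le hs (Nat.le_add_right s t)⟩ : Fin N) ∉ T),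
          C * (((T.sort (· ≤ ·)).map f).reverse.prod * ((Tᶜ.sort (· ≤ ·)).map f).prod) := by
  subst h
  simp only [Fin.cast_refl, id]
  rw [finsum_eq_sum_of_fintype]
  set z : Fin (s + t) := ⟨0, Nat.lt_of_lt_of_le hs (Nat.le_add_right s t)⟩ with hz
  apply Finset.sum_bij (i := fun (sh : Shuffle1 s t) _ =>
    (Finset.univ.map ⟨sh.β, sh.mono_beta.injective⟩ : Finset (Fin (s + t))))
  · -- maps to filter
    intro sh _
    simp only [Finset.mem_filter, Finset.mem_univ, true_and]
    constructor
    · rw [Finset.card_map, Finset.card_univ, Fintype.card_fin]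
    · intro hmem
      rw [Finset.mem_map] at hmem
      obtain ⟨j, _, hj⟩ := hmem
      exact sh.disj ⟨0, hs⟩ j (by rw [sh.first hs, ← hz]; exact hj.symm)
  · -- injective
    intro sh1 _ sh2 _ hT
    have hcard : (Finset.univ.map ⟨sh1.β, sh1.mono_beta.injective⟩ : Finset (Fin (s+t))).card = t := by
      rw [Finset.card_map, Finset.card_univ, Fintype.card_fin]
    have hβ1 : sh1.β = Finset.orderEmbOfFin _ hcard :=
      Finset.orderEmbOfFin_unique hcard (fun x => by simp) sh1.mono_beta
    have hβ2 : sh2.β = Finset.orderEmbOfFin _ hcard := by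
      refine Finset.orderEmbOfFin_unique hcard (fun x => ?_) sh2.mono_beta
      rw [hT]; simp
    have hβ : sh1.β = sh2.β := by rw [hβ1, hβ2]
    -- alpha determined: both strictmono into complement of T
    have hccard : ((Finset.univ.map ⟨sh1.β, sh1.mono_beta.injective⟩ : Finset (Fin (s+t)))ᶜ).card = s := by
      rw [Finset.card_compl, hcard, Fintype.card_fin, Nat.add_sub_cancel]
    have hα1 : sh1.α = Finset.orderEmbOfFin _ hccard := by
      refine Finset.orderEmbOfFin_unique hccard (fun x => ?_) sh1.mono_alpha
      rw [Finset.mem_compl, Finset.mem_map]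
      rintro ⟨j, _, hj⟩
      exact sh1.disj x j hj.symm
    have hα2 : sh2.α = Finset.orderEmbOfFin _ hccard := by
      refine Finset.orderEmbOfFin_unique hccard (fun x => ?_) sh2.mono_alpha
      rw [Finset.mem_compl, hT, Finset.mem_map]
      rintro ⟨j, _, hj⟩
      exact sh2.disj x j hj.symm
    exact Shuffle1.ext'' (by rw [hα1, hα2]) hβ
  · -- surjective
    intro T hT
    rw [Finset.mem_filter] at hT
    obtain ⟨-, hTcard, hT0⟩ := hT
    have hccard : (Tᶜ).card = s := by
      rw [Finset.card_compl, hTcard, Fintype.card_fin, Nat.add_sub_cancel]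
    refine ⟨⟨Tᶜ.orderEmbOfFin hccard, T.orderEmbOfFin hTcard,
      (Tᶜ.orderEmbOfFin hccard).strictMono, (T.orderEmbOfFin hTcard).strictMono,
      fun i j hij => ?_, fun hs' => ?_⟩, Finset.mem_univ _, ?_⟩
    · have h1 := Finset.orderEmbOfFin_mem Tᶜ hccard i
      have h2 := Finset.orderEmbOfFin_mem T hTcard j
      rw [hij, Finset.mem_compl] at h1
      exact h1 h2
    · have hzmem : z ∈ Tᶜ := Finset.mem_compl.mpr hT0
      have hmin : Tᶜ.orderEmbOfFin hccard ⟨0, hs'⟩ = Tᶜ.min' ⟨z, hzmem⟩ :=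
        Finset.orderEmbOfFin_zero hccard hs'
      refine le_antisymm ?_ ?_
      · rw [hmin]; exact Finset.min'_le _ _ hzmem
      · exact Fin.mk_le_mk.mpr (Nat.zero_le _)
    · ext x
      rw [Finset.mem_map]
      constructor
      · rintro ⟨j, _, hj⟩
        rw [← hj]
        exact Finset.orderEmbOfFin_mem T hTcard j
      · intro hx
        have : x ∈ Set.range (T.orderEmbOfFin hTcard) := by
          rw [Finset.range_orderEmbOfFin]; exact hx
        obtain ⟨j, hj⟩ := this
        exact ⟨j, Finset.mem_univ j, hj⟩
  · -- values
    intro sh _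
    set T : Finset (Fin (s+t)) := Finset.univ.map ⟨sh.β, sh.mono_beta.injective⟩ with hT
    have hcard : T.card = t := by
      rw [hT, Finset.card_map, Finset.card_univ, Fintype.card_fin]
    have hccard : (Tᶜ).card = s := by
      rw [Finset.card_compl, hcard, Fintype.card_fin, Nat.add_sub_cancel]
    have hβ : sh.β = Finset.orderEmbOfFin _ hcard :=
      Finset.orderEmbOfFin_unique hcard (fun x => by simp [hT]) sh.mono_beta
    have hα : sh.α = Finset.orderEmbOfFin _ hccard := by
      refine Finset.orderEmbOfFin_unique hccard (fun x => ?_) sh.mono_alpha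
      rw [Finset.mem_compl, hT, Finset.mem_map]
      rintro ⟨j, _, hj⟩
      exact sh.disj x j hj.symm
    rw [List.prod_append, hβ, hα]
    rw [show (List.ofFn fun j => f (Finset.orderEmbOfFin T hcard j))
        = (T.sort (· ≤ ·)).map f from ofFn_orderEmbOfFin T hcard f]
    rw [show (List.ofFn fun j => f (Finset.orderEmbOfFin Tᶜ hccard j))
        = (Tᶜ.sort (· ≤ ·)).map f from ofFn_orderEmbOfFin Tᶜ hccard f]



lemma mergeSum {R : Type*} [AddCommMonoid R] (m : ℕ) (F : Finset (Fin (m+1)) → R) :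
    (∑ i : Fin (m+1), ∑ T ∈ Finset.univ.filter
        (fun T : Finset (Fin (m+1)) => T.card = (i : ℕ) ∧ (0 : Fin (m+1)) ∉ T), F T)
      = ∑ T ∈ Finset.univ.filter (fun T : Finset (Fin (m+1)) => (0 : Fin (m+1)) ∉ T), F T := by
  rw [← Finset.sum_fiberwise_of_maps_to (t := (Finset.univ : Finset (Fin (m+1))))
    (g := fun T : Finset (Fin (m+1)) =>
      (⟨T.card % (m+1), Nat.mod_lt _ (Nat.succ_pos m)⟩ : Fin (m+1)))
    (fun x _ => Finset.mem_univ _)]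
  apply Finset.sum_congr rfl
  intro i _
  apply Finset.sum_congr _ (fun _ _ => rfl)
  rw [Finset.filter_filter]
  apply Finset.filter_congr
  intro T _
  have hb : ((0 : Fin (m+1)) ∉ T) → T.card ≤ m := by
    intro hT
    have hsub : T ⊆ Finset.univ.erase 0 :=
      fun x hx => Finset.mem_erase.mpr ⟨fun h => hT (h ▸ hx), Finset.mem_univ x⟩
    have := Finset.card_le_card hsub
    simpa [Finset.card_erase_of_mem, Finset.card_univ] using this
  constructor
  · rintro ⟨hcard, h0⟩
    refine ⟨h0, ?_⟩
    apply Fin.ext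
    simp only [hcard]
    exact Nat.mod_eq_of_lt i.isLt
  · rintro ⟨h0, hi⟩
    refine ⟨?_, h0⟩
    have := congrArg Fin.val hi
    simp only at this
    rw [Nat.mod_eq_of_lt (Nat.lt_succ_of_le (hb h0))] at this
    exact this

lemma finalBij {R : Type*} [Ring R] (m : ℕ) (a : Fin (m+1) → R) :
    (∑ c : Fin m → Bool,
      (List.ofFn fun i => if c i then -(a i.succ) else 1).reverse.prod * a 0 *
      (List.ofFn fun i => if c i then 1 else a i.succ).prod)
    = ∑ T ∈ Finset.univ.filter (fun T : Finset (Fin (m+1)) => (0 : Fin (m+1)) ∉ T),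
        (-1 : R) ^ T.card *
          (((T.sort (· ≤ ·)).map a).reverse.prod * ((Tᶜ.sort (· ≤ ·)).map a).prod) := by
  apply Finset.sum_bij (i := fun (c : Fin m → Bool) _ =>
    ((Finset.univ.filter (fun j => c j)).map ⟨Fin.succ, Fin.succ_injective m⟩ : Finset (Fin (m+1))))
  · intro c _
    simp only [Finset.mem_filter, Finset.mem_univ, true_and, Finset.mem_map]
    rintro ⟨j, _, hj⟩
    exact Fin.succ_ne_zero j hj
  · intro c1 _ c2 _ h
    have h' := Finset.map_injective ⟨Fin.succ, Fin.succ_injective m⟩ h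
    funext j
    have := Finset.ext_iff.mp h' j
    simp only [Finset.mem_filter, Finset.mem_univ, true_and] at this
    by_cases hc : c1 j = true
    · rw [hc, (this.mp hc).symm]
    · have : ¬ c2 j = true := fun hh => hc (this.mpr hh)
      rw [Bool.not_eq_true] at *
      rw [hc, this]
  · intro T hT
    rw [Finset.mem_filter] at hT
    obtain ⟨-, hT0⟩ := hT
    refine ⟨fun j => decide (j.succ ∈ T), Finset.mem_univ _, ?_⟩
    ext x
    simp only [Finset.mem_map, Finset.mem_filter, Finset.mem_univ, true_and,
      Function.Embedding.coeFn_mk, decide_eq_true_eq]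
    constructor
    · rintro ⟨j, hj, rfl⟩; exact hj
    · intro hx
      have hx0 : x ≠ 0 := fun h => hT0 (h ▸ hx)
      obtain ⟨y, rfl⟩ := Fin.eq_succ_of_ne_zero hx0
      exact ⟨y, hx, rfl⟩
  · intro c _
    set S : Finset (Fin m) := Finset.univ.filter (fun j => c j) with hS
    set T : Finset (Fin (m+1)) := S.map ⟨Fin.succ, Fin.succ_injective m⟩ with hTdef
    have hcard : T.card = S.card := Finset.card_map _
    have h0T : (0 : Fin (m+1)) ∉ T := by
      simp only [hTdef, Finset.mem_map]
      rintro ⟨j, _, hj⟩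
      exact Fin.succ_ne_zero j hj
    have hmemT : ∀ i : Fin m, i.succ ∈ T ↔ c i = true := by
      intro i
      simp only [hTdef, Finset.mem_map, hS, Finset.mem_filter, Finset.mem_univ, true_and,
        Function.Embedding.coeFn_mk]
      constructor
      · rintro ⟨j, hj, hji⟩
        rwa [← Fin.succ_injective m hji]
      · intro h; exact ⟨i, h, rfl⟩
    rw [maskProdRev (m+1) T a, maskProd (m+1) Tᶜ a]
    have e1 : (List.ofFn fun j : Fin (m+1) => if j ∈ T then a j else 1)
        = 1 :: List.ofFn fun i : Fin m => if c i then a i.succ else 1 := by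
      rw [List.ofFn_succ]
      congr 1
      · rw [if_neg h0T]
      · congr 1; funext i; by_cases hc : c i = true <;> simp [hmemT i, hc]
    have e2 : (List.ofFn fun j : Fin (m+1) => if j ∈ Tᶜ then a j else 1)
        = a 0 :: List.ofFn fun i : Fin m => if c i then 1 else a i.succ := by
      rw [List.ofFn_succ]
      congr 1
      · rw [if_pos (Finset.mem_compl.mpr h0T)]
      · congr 1; funext i
        by_cases hc : c i = true <;> simp [Finset.mem_compl, hmemT i, hc]
    rw [e1, e2]
    simp only [List.reverse_cons, List.prod_append, List.prod_cons, List.prod_nil, mul_one]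
    rw [signOfFnRev m c (fun i => a i.succ), hcard, hS]
    rw [mul_assoc, mul_assoc]

end pieces

/-- For elements `a₁,…,aₙ` (`n ≥ 1`) of an associative ring, the left-normed commutator
bracket satisfies
`[a₁,…,aₙ] = ∑_{i=0}^{n-1} ∑_{(α,β) ∈ Sh¹(n−i,i)} (−1)^i · a_{β(i)}⋯a_{β(1)} a_{α(1)}⋯a_{α(n−i)}`. -/
theorem leftBracket_eq_sum_shuffles {R : Type*} [Ring R] (n : ℕ) (hn : 1 ≤ n) (a : Fin n → R) :
    lieWord (List.ofFn a) =
      ∑ i : Fin n, ∑ᶠ sh : Shuffle1 (n - (i : ℕ)) (i : ℕ),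
        (-1 : R) ^ (i : ℕ) *
          ((List.ofFn fun j => a (Fin.cast (Nat.sub_add_cancel i.isLt.le) (sh.β j))).reverse
            ++ List.ofFn fun j => a (Fin.cast (Nat.sub_add_cancel i.isLt.le) (sh.α j))).prod := by
  obtain ⟨m, rfl⟩ : ∃ m, n = m + 1 := ⟨n - 1, (Nat.succ_pred_eq_of_pos hn).symm⟩
  -- left side
  rw [List.ofFn_succ]
  show (List.ofFn fun i : Fin m => a i.succ).foldl (fun p q => ⁅p, q⁆) (a 0) = _
  rw [stageA m (fun i => a i.succ) (a 0)]
  -- right side : apply stageB for each i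
  have hrhs : ∀ i : Fin (m+1),
      (∑ᶠ sh : Shuffle1 (m + 1 - (i : ℕ)) (i : ℕ),
        (-1 : R) ^ (i : ℕ) *
          ((List.ofFn fun j => a (Fin.cast (Nat.sub_add_cancel i.isLt.le) (sh.β j))).reverse
            ++ List.ofFn fun j => a (Fin.cast (Nat.sub_add_cancel i.isLt.le) (sh.α j))).prod)
      = ∑ T ∈ Finset.univ.filter
            (fun T : Finset (Fin (m+1)) => T.card = (i : ℕ) ∧ (0 : Fin (m+1)) ∉ T),
          (-1 : R) ^ (i : ℕ) *
            (((T.sort (· ≤ ·)).map a).reverse.prod * ((Tᶜ.sort (· ≤ ·)).map a).prod) := by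
    intro i
    have hs : 0 < m + 1 - (i : ℕ) := Nat.sub_pos_of_lt i.isLt
    rw [stageB (m + 1 - (i : ℕ)) (i : ℕ) (m+1) (Nat.sub_add_cancel i.isLt.le) hs a
      ((-1 : R) ^ (i : ℕ))]
    apply Finset.sum_congr
    · congr 1
    · intros; rfl
  simp only [hrhs]
  -- replace sign exponent by T.card and merge the double sum
  have hsign : ∀ i : Fin (m+1),
      (∑ T ∈ Finset.univ.filter
          (fun T : Finset (Fin (m+1)) => T.card = (i : ℕ) ∧ (0 : Fin (m+1)) ∉ T),
        (-1 : R) ^ (i : ℕ) *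
          (((T.sort (· ≤ ·)).map a).reverse.prod * ((Tᶜ.sort (· ≤ ·)).map a).prod))
      = ∑ T ∈ Finset.univ.filter
          (fun T : Finset (Fin (m+1)) => T.card = (i : ℕ) ∧ (0 : Fin (m+1)) ∉ T),
        (-1 : R) ^ T.card *
          (((T.sort (· ≤ ·)).map a).reverse.prod * ((Tᶜ.sort (· ≤ ·)).map a).prod) := by
    intro i
    apply Finset.sum_congr rfl
    intro T hT
    rw [Finset.mem_filter] at hT
    rw [hT.2.1]
  simp only [hsign]
  rw [mergeSum]
  exact finalBij m a
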